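/- Suppose a countable group G, a subgroup H ≤ G, and a subset U ⊆ G satisfy: (i) U generates G; (ii) hUh⁻¹ ⊆ U for all h ∈ H; (iii) there is N ∈ ℕ such that every element of G is a product of at most N elements of U ∪ H ∪ H⁻¹; (iv) there is C₂ < ∞ such that every quasi-cocycle into any unitary G-representation is bounded on U; (v) G has property (T). Then for every unitary representation π of G with no nonzero invariant vector, every quasi-π-cocycle b: G → ℋ is bounded on G. -/

import Mathlib

/-- Kazhdan's property (T). -/
def HasPropertyT (G : Type) [Group G] : Prop :=
  ∀ (E : Type) [NormedAddCommGroup E] [InnerProductSpace ℂ E] [CompleteSpace E],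
    ∀ π : G →* (E ≃ₗᵢ[ℂ] E),
      (∀ ε > (0 : ℝ), ∀ S : Finset G, ∃ ξ : E, ξ ≠ 0 ∧ ∀ s ∈ S, ‖ξ - π s ξ‖ < ε * ‖ξ‖) →
      ∃ ξ : E, ξ ≠ 0 ∧ ∀ g : G, π g ξ = ξ

/-- Suppose `(G, H, U)` satisfy: (i) `U` generates `G`; (ii) `U` is invariant under
conjugation by `H`; (iii) bounded generation by `U ∪ H ∪ H⁻¹`; (iv) every quasi-cocycle
into any unitary `G`-representation is bounded on `U`; (v) `G` has property (T). Then for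
every unitary representation `π` with no nonzero invariant vector, every quasi-`π`-cocycle
is bounded on `G`. -/
theorem quasicocycle_bounded_of_triple
    {G : Type} [Group G] [Countable G]
    (H : Subgroup G) (U : Set G)
    (hgen : Subgroup.closure U = ⊤)
    (hconj : ∀ h ∈ H, ∀ u ∈ U, h * u * h⁻¹ ∈ U)
    (N : ℕ)
    (hbg : ∀ g : G, ∃ l : List G, l.length ≤ N ∧
      (∀ x ∈ l, x ∈ U ∪ (H : Set G) ∪ (H : Set G)⁻¹) ∧ l.prod = g)
    (hrelTT : ∀ (E : Type) [NormedAddCommGroup E] [InnerProductSpace ℂ E] [CompleteSpace E]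
      (π : G →* (E ≃ₗᵢ[ℂ] E)) (b : G → E),
      (∃ D : ℝ, ∀ g g' : G, ‖b (g * g') - b g - π g (b g')‖ ≤ D) →
      ∃ C₂ : ℝ, ∀ u ∈ U, ‖b u‖ ≤ C₂)
    (hT : HasPropertyT G)
    (E : Type) [NormedAddCommGroup E] [InnerProductSpace ℂ E] [CompleteSpace E]
    (π : G →* (E ≃ₗᵢ[ℂ] E))
    (hπ : ∀ ξ : E, (∀ g : G, π g ξ = ξ) → ξ = 0)
    (b : G → E)
    (hb : ∃ D : ℝ, ∀ g g' : G, ‖b (g * g') - b g - π g (b g')‖ ≤ D) :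
    ∃ M : ℝ, ∀ g : G, ‖b g‖ ≤ M := by
  classical
  obtain ⟨D₀, hD₀⟩ := hb
  set D : ℝ := max D₀ 0 with hDdef
  have hD : ∀ g g' : G, ‖b (g * g') - b g - π g (b g')‖ ≤ D :=
    fun g g' => (hD₀ g g').trans (le_max_left _ _)
  have hDnn : (0:ℝ) ≤ D := le_max_right _ _
  obtain ⟨C₀, hC₀⟩ := hrelTT E π b ⟨D, hD⟩
  set C : ℝ := max C₀ 0 with hCdef
  have hC : ∀ u ∈ U, ‖b u‖ ≤ C := fun u hu => (hC₀ u hu).trans (le_max_left _ _)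
  have hCnn : (0:ℝ) ≤ C := le_max_right _ _
  -- bound on b 1
  have hb1 : ‖b 1‖ ≤ D := by
    have h1 := hD 1 1
    rw [mul_one, map_one] at h1
    simpa using h1
  -- key estimate: π(u) almost fixes b(h) for u ∈ U, h ∈ H
  set K : ℝ := 2 * D + 2 * C with hKdef
  have key : ∀ u ∈ U, ∀ h : G, h ∈ H → ‖π u (b h) - b h‖ ≤ K := by
    intro u hu h hh
    have hw : h⁻¹ * u * h ∈ U := by
      have := hconj h⁻¹ (inv_mem hh) u hu
      rwa [inv_inv] at this
    set w : G := h⁻¹ * u * h with hwdef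
    have huh : u * h = h * w := by rw [hwdef]; group
    have e1 := hD u h
    have e2 := hD h w
    rw [← huh] at e2
    have hsplit : π u (b h) - b h =
        (-(b (u * h) - b u - π u (b h)) + (b (u * h) - b h - π h (b w)) + π h (b w)) - b u := by
      abel
    have hbw : ‖(π h) (b w)‖ ≤ C := by
      rw [LinearIsometryEquiv.norm_map]; exact hC w hw
    rw [hsplit]
    calc ‖(-(b (u * h) - b u - π u (b h)) + (b (u * h) - b h - π h (b w)) + π h (b w)) - b u‖
        ≤ ‖-(b (u * h) - b u - π u (b h)) + (b (u * h) - b h - π h (b w)) + π h (b w)‖ + ‖b u‖ :=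
          norm_sub_le _ _
      _ ≤ ‖-(b (u * h) - b u - π u (b h)) + (b (u * h) - b h - π h (b w))‖ + ‖(π h) (b w)‖ + ‖b u‖ := by
          gcongr; exact norm_add_le _ _
      _ ≤ ‖-(b (u * h) - b u - π u (b h))‖ + ‖b (u * h) - b h - π h (b w)‖ + ‖(π h) (b w)‖ + ‖b u‖ := by
          gcongr; exact norm_add_le _ _
      _ ≤ D + D + C + C := by
          rw [norm_neg]
          exact add_le_add (add_le_add (add_le_add e1 e2) hbw) (hC u hu)
      _ = K := by ring
  have hKnn : (0:ℝ) ≤ K := by positivity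
  -- almost invariance spreads over products
  have piListBound : ∀ (l : List G) (ξ : E), (∀ y ∈ l, ‖π y ξ - ξ‖ ≤ K) →
      ‖π l.prod ξ - ξ‖ ≤ l.length * K := by
    intro l ξ
    induction l with
    | nil => intro _; simp
    | cons x t ih =>
      intro hl
      have hx : ‖π x ξ - ξ‖ ≤ K := hl x List.mem_cons_self
      have ht : ‖π t.prod ξ - ξ‖ ≤ t.length * K :=
        ih (fun y hy => hl y (List.mem_cons_of_mem _ hy))
      have hmul : π (x :: t).prod ξ = π x (π t.prod ξ) := by
        rw [List.prod_cons, map_mul]; rfl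
      rw [hmul]
      calc ‖π x (π t.prod ξ) - ξ‖
          ≤ ‖π x (π t.prod ξ) - π x ξ‖ + ‖π x ξ - ξ‖ :=
            norm_sub_le_norm_sub_add_norm_sub _ _ _
        _ = ‖π t.prod ξ - ξ‖ + ‖π x ξ - ξ‖ := by
            rw [← LinearIsometryEquiv.map_sub, LinearIsometryEquiv.norm_map]
        _ ≤ t.length * K + K := add_le_add ht hx
        _ = (x :: t).length * K := by
            rw [List.length_cons]
            push_cast
            ring
  -- b is bounded on H
  have hHbdd : ∃ C₃ : ℝ, ∀ h ∈ H, ‖b h‖ ≤ C₃ := by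
    by_contra hcon
    push_neg at hcon
    have hword : ∀ s : G, ∃ l : List G, (∀ y ∈ l, y ∈ U ∪ U⁻¹) ∧ l.prod = s := by
      intro s
      have hs : s ∈ (Subgroup.closure U).toSubmonoid := by rw [hgen]; trivial
      rw [Subgroup.closure_toSubmonoid] at hs
      exact Submonoid.exists_list_of_mem_closure hs
    have hainv : ∀ ε > (0:ℝ), ∀ S : Finset G, ∃ ξ : E, ξ ≠ 0 ∧
        ∀ s ∈ S, ‖ξ - π s ξ‖ < ε * ‖ξ‖ := by
      intro ε hε S
      set L : ℕ := S.sup (fun s => (Classical.choose (hword s)).length) with hLdef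
      obtain ⟨h, hh, hbh⟩ := hcon (max ((L * K) / ε) 0)
      have hbhpos : 0 < ‖b h‖ := lt_of_le_of_lt (le_max_right _ _) hbh
      have hLK : (L:ℝ) * K < ε * ‖b h‖ := by
        have h2 : (L:ℝ) * K / ε < ‖b h‖ := lt_of_le_of_lt (le_max_left _ _) hbh
        have := (div_lt_iff₀ hε).mp h2
        linarith [this]
      refine ⟨b h, fun h0 => by simp [h0] at hbhpos, ?_⟩
      intro s hs
      obtain ⟨hly, hlp⟩ := Classical.choose_spec (hword s)
      have hyb : ∀ y ∈ Classical.choose (hword s), ‖π y (b h) - b h‖ ≤ K := by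
        intro y hy
        rcases hly y hy with hyU | hyUi
        · exact key y hyU h hh
        · have hyU' : y⁻¹ ∈ U := Set.mem_inv.mp hyUi
          have hcomp : π y⁻¹ (π y (b h)) = b h := by
            have hfun : (π y⁻¹) ∘ (π y) = id := by
              rw [← LinearIsometryEquiv.coe_mul, ← map_mul, inv_mul_cancel, map_one]
              rfl
            exact congrFun hfun (b h)
          calc ‖π y (b h) - b h‖
              = ‖π y⁻¹ (π y (b h) - b h)‖ := (LinearIsometryEquiv.norm_map _ _).symm
            _ = ‖b h - π y⁻¹ (b h)‖ := by rw [LinearIsometryEquiv.map_sub, hcomp]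
            _ = ‖π y⁻¹ (b h) - b h‖ := norm_sub_rev _ _
            _ ≤ K := key y⁻¹ hyU' h hh
      have hlen : (Classical.choose (hword s)).length ≤ L :=
        Finset.le_sup (f := fun s => (Classical.choose (hword s)).length) hs
      calc ‖b h - π s (b h)‖
          = ‖π s (b h) - b h‖ := norm_sub_rev _ _
        _ = ‖π (Classical.choose (hword s)).prod (b h) - b h‖ := by rw [hlp]
        _ ≤ (Classical.choose (hword s)).length * K := piListBound _ _ hyb
        _ ≤ (L:ℝ) * K := by
            exact mul_le_mul_of_nonneg_right (Nat.cast_le.mpr hlen) hKnn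
        _ < ε * ‖b h‖ := hLK
    obtain ⟨ξ, hξ0, hξinv⟩ := hT E π hainv
    exact hξ0 (hπ ξ hξinv)
  obtain ⟨C₃, hC₃⟩ := hHbdd
  -- bound on H⁻¹
  have hHinv : ∀ h : G, h ∈ H → ‖b h⁻¹‖ ≤ 2 * D + C₃ := by
    intro h hh
    have e := hD h h⁻¹
    rw [mul_inv_cancel] at e
    have hsplit : π h (b h⁻¹) = (b 1 - b h) - (b 1 - b h - π h (b h⁻¹)) := by abel
    have hbhC : ‖b h‖ ≤ C₃ := hC₃ h hh
    calc ‖b h⁻¹‖ = ‖π h (b h⁻¹)‖ := (LinearIsometryEquiv.norm_map _ _).symm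
      _ = ‖(b 1 - b h) - (b 1 - b h - π h (b h⁻¹))‖ := congrArg norm hsplit
      _ ≤ ‖b 1 - b h‖ + ‖b 1 - b h - π h (b h⁻¹)‖ := norm_sub_le _ _
      _ ≤ (‖b 1‖ + ‖b h‖) + D := add_le_add (norm_sub_le _ _) e
      _ ≤ (D + C₃) + D := by gcongr
      _ = 2 * D + C₃ := by ring
  set B : ℝ := max C (2 * D + C₃) with hBdef
  have hBnn : (0:ℝ) ≤ B := le_trans hCnn (le_max_left _ _)
  -- every element of the bounded generating set has b-norm ≤ B
  have hgenB : ∀ x : G, x ∈ U ∪ (H : Set G) ∪ (H : Set G)⁻¹ → ‖b x‖ ≤ B := by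
    intro x hx
    rcases hx with (hxU | hxH) | hxHi
    · exact (hC x hxU).trans (le_max_left _ _)
    · have : ‖b x‖ ≤ C₃ := hC₃ x hxH
      have : ‖b x‖ ≤ 2 * D + C₃ := by linarith
      exact this.trans (le_max_right _ _)
    · have hxi : x⁻¹ ∈ H := Set.mem_inv.mp hxHi
      have := hHinv x⁻¹ hxi
      rw [inv_inv] at this
      exact this.trans (le_max_right _ _)
  -- products
  have bListBound : ∀ l : List G, (∀ x ∈ l, ‖b x‖ ≤ B) →
      ‖b l.prod‖ ≤ D + l.length * (B + D) := by
    intro l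
    induction l with
    | nil => intro _; simpa using hb1
    | cons x t ih =>
      intro hl
      have hx : ‖b x‖ ≤ B := hl x List.mem_cons_self
      have ht : ‖b t.prod‖ ≤ D + t.length * (B + D) :=
        ih (fun y hy => hl y (List.mem_cons_of_mem _ hy))
      have e := hD x t.prod
      have hsplit : b (x * t.prod) =
          (b (x * t.prod) - b x - π x (b t.prod)) + b x + π x (b t.prod) := by abel
      rw [List.prod_cons]
      calc ‖b (x * t.prod)‖
          = ‖(b (x * t.prod) - b x - π x (b t.prod)) + b x + π x (b t.prod)‖ := by rw [← hsplit]
        _ ≤ ‖(b (x * t.prod) - b x - π x (b t.prod)) + b x‖ + ‖π x (b t.prod)‖ := norm_add_le _ _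
        _ ≤ ‖b (x * t.prod) - b x - π x (b t.prod)‖ + ‖b x‖ + ‖π x (b t.prod)‖ := by
            gcongr; exact norm_add_le _ _
        _ = ‖b (x * t.prod) - b x - π x (b t.prod)‖ + ‖b x‖ + ‖b t.prod‖ := by
            rw [LinearIsometryEquiv.norm_map]
        _ ≤ D + B + (D + t.length * (B + D)) := by gcongr
        _ = D + (x :: t).length * (B + D) := by
            rw [List.length_cons]
            push_cast
            ring
  refine ⟨D + N * (B + D), fun g => ?_⟩
  obtain ⟨l, hlen, hmem, hprod⟩ := hbg g
  have hBD : (0:ℝ) ≤ B + D := by linarith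
  calc ‖b g‖ = ‖b l.prod‖ := by rw [hprod]
    _ ≤ D + l.length * (B + D) := bListBound l (fun x hx => hgenB x (hmem x hx))
    _ ≤ D + N * (B + D) :=
        add_le_add le_rfl (mul_le_mul_of_nonneg_right (by exact_mod_cast hlen) hBD)
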